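/- Let a_0,…,a_n be distinct positive reals and β ≥ 0. Then ∑_{k=0}^{n} (∏_{j≠k} 1/(a_j − a_k)) · 1/(1 + β a_k) = β^n ∏_{k=0}^{n} 1/(1 + β a_k). -/

import Mathlib

open Polynomial Finset

/-- The key residue identity for the inhomogeneous geometric kernel. -/
theorem stmt2 (n : ℕ) (a : ℕ → ℝ) (hpos : ∀ k ≤ n, 0 < a k)
    (hdist : ∀ j ≤ n, ∀ k ≤ n, j ≠ k → a j ≠ a k) (β : ℝ) (hβ : 0 ≤ β) :
    ∑ k ∈ Finset.range (n + 1),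
        (∏ j ∈ (Finset.range (n + 1)).erase k, (a j - a k)⁻¹) * (1 + β * a k)⁻¹
      = β ^ n * ∏ k ∈ Finset.range (n + 1), (1 + β * a k)⁻¹ := by
  set s := Finset.range (n + 1) with hs
  have hmem : ∀ k, k ∈ s ↔ k ≤ n := by
    intro k; simp [hs, Nat.lt_succ_iff]
  have hpos' : ∀ k ∈ s, 0 < a k := fun k hk => hpos k ((hmem k).1 hk)
  -- the coefficients
  set c : ℕ → ℝ := fun k => ∏ j ∈ s.erase k, (a j - a k)⁻¹ with hc
  -- polynomial
  set p : ℝ[X] := ∑ k ∈ s, C (c k) * ∏ j ∈ s.erase k, (C 1 + C (a j) * X) with hp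
  have hcard : #s = n + 1 := by simp [hs]
  -- degree bound
  have hdegp : p.degree < (#s : ℕ) := by
    have h1 : p.natDegree ≤ n := by
      apply Polynomial.natDegree_sum_le_of_forall_le
      intro k hk
      calc (C (c k) * ∏ j ∈ s.erase k, (C 1 + C (a j) * X)).natDegree
          ≤ (∏ j ∈ s.erase k, (C 1 + C (a j) * X)).natDegree := natDegree_C_mul_le _ _
        _ ≤ ∑ j ∈ s.erase k, (C 1 + C (a j) * X).natDegree := natDegree_prod_le _ _
        _ ≤ ∑ j ∈ s.erase k, 1 := by
            apply Finset.sum_le_sum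
            intro j hj
            have : (C 1 + C (a j) * X : ℝ[X]) = C (a j) * X + C 1 := by ring
            rw [this]
            exact natDegree_linear_le
        _ ≤ n := by
            rw [Finset.sum_const, smul_eq_mul, mul_one, Finset.card_erase_of_mem hk, hcard]; omega
    calc p.degree ≤ (p.natDegree : WithBot ℕ) := degree_le_natDegree
      _ ≤ (n : WithBot ℕ) := by exact_mod_cast h1
      _ < ((#s : ℕ) : WithBot ℕ) := by rw [hcard]; exact_mod_cast Nat.lt_succ_self n
  -- points
  set v : ℕ → ℝ := fun i => -(a i)⁻¹ with hv
  have hinj : Set.InjOn v s := by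
    intro i hi j hj hij
    by_contra hne
    have : a i ≠ a j := hdist i ((hmem i).1 hi) j ((hmem j).1 hj) hne
    apply this
    have hi0 := (hpos' i hi).ne'
    have hj0 := (hpos' j hj).ne'
    have : (a i)⁻¹ = (a j)⁻¹ := by
      have := hij
      simp only [hv, neg_inj] at this
      exact this
    exact inv_injective this
  -- evaluation equality
  have heval : ∀ i ∈ s, p.eval (v i) = (X ^ n : ℝ[X]).eval (v i) := by
    intro i hi
    have hia : a i ≠ 0 := (hpos' i hi).ne'
    rw [hp]
    simp only [eval_finset_sum, eval_mul, eval_C, eval_prod, eval_add, eval_one, eval_pow, eval_X]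
    rw [Finset.sum_eq_single i]
    · -- main term
      rw [hc]
      rw [← Finset.prod_mul_distrib]
      have : ∀ j ∈ s.erase i, (a j - a i)⁻¹ * (1 + a j * v i) = v i := by
        intro j hj
        have hji : a j ≠ a i :=
          hdist j ((hmem j).1 (Finset.mem_of_mem_erase hj)) i ((hmem i).1 hi)
            (Finset.ne_of_mem_erase hj)
        have hsub : a j - a i ≠ 0 := sub_ne_zero.mpr hji
        rw [hv]
        field_simp
        ring
      rw [Finset.prod_congr rfl this, Finset.prod_const,
        Finset.card_erase_of_mem hi, hcard]
      simp
    · intro k hk hki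
      have hiek : i ∈ s.erase k := Finset.mem_erase.mpr ⟨fun h => hki h.symm, hi⟩
      rw [Finset.prod_eq_zero hiek]
      · ring
      · rw [hv]; field_simp; norm_num
    · intro h; exact absurd hi h
  -- polynomial identity
  have hpoly : p = X ^ n := by
    apply Polynomial.eq_of_degrees_lt_of_eval_index_eq s hinj hdegp _ heval
    rw [hcard]
    calc (X ^ n : ℝ[X]).degree = (n : WithBot ℕ) := degree_X_pow n
      _ < ((n + 1 : ℕ) : WithBot ℕ) := by exact_mod_cast Nat.lt_succ_self n
  -- evaluate at β
  have hkey : ∑ k ∈ s, c k * ∏ j ∈ s.erase k, (1 + a j * β) = β ^ n := by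
    have := congrArg (Polynomial.eval β) hpoly
    simpa [hp, eval_finset_sum, eval_prod] using this
  -- nonvanishing
  have hne : ∀ j ∈ s, (1 : ℝ) + β * a j ≠ 0 := by
    intro j hj
    have h1 : 0 ≤ β * a j := mul_nonneg hβ (hpos' j hj).le
    nlinarith
  -- finish
  have key2 : ∀ k ∈ s, c k * (1 + β * a k)⁻¹
      = c k * (∏ j ∈ s.erase k, (1 + a j * β)) * ∏ j ∈ s, (1 + β * a j)⁻¹ := by
    intro k hk
    rw [← Finset.mul_prod_erase s (fun j => (1 + β * a j)⁻¹) hk]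
    have hcomm : ∏ j ∈ s.erase k, (1 + a j * β) = ∏ j ∈ s.erase k, (1 + β * a j) := by
      apply Finset.prod_congr rfl; intro j _; ring
    rw [hcomm]
    have h2 : (∏ j ∈ s.erase k, (1 + β * a j)) * ∏ j ∈ s.erase k, (1 + β * a j)⁻¹ = 1 := by
      rw [← Finset.prod_mul_distrib]
      exact Finset.prod_eq_one fun j hj => mul_inv_cancel₀ (hne j (Finset.mem_of_mem_erase hj))
    calc c k * (1 + β * a k)⁻¹
        = c k * (1 + β * a k)⁻¹ *
            ((∏ j ∈ s.erase k, (1 + β * a j)) * ∏ j ∈ s.erase k, (1 + β * a j)⁻¹) := by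
          rw [h2, mul_one]
      _ = (c k * ∏ j ∈ s.erase k, (1 + β * a j)) *
            ((1 + β * a k)⁻¹ * ∏ j ∈ s.erase k, (1 + β * a j)⁻¹) := by ring
  calc ∑ k ∈ s, c k * (1 + β * a k)⁻¹
      = ∑ k ∈ s, c k * (∏ j ∈ s.erase k, (1 + a j * β)) * ∏ j ∈ s, (1 + β * a j)⁻¹ := by
        apply Finset.sum_congr rfl
        intro k hk
        rw [key2 k hk]
    _ = (∑ k ∈ s, c k * ∏ j ∈ s.erase k, (1 + a j * β)) * ∏ j ∈ s, (1 + β * a j)⁻¹ := by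
        rw [← Finset.sum_mul]
    _ = β ^ n * ∏ k ∈ s, (1 + β * a k)⁻¹ := by rw [hkey]
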